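/- arXiv:2307.10104 — 4 statements merged into one kernel-verified Lean document; each statement's English description precedes it below -/
import Mathlib

section
/- Let φ : U → Y be S-differentiable and (x,h) ∈ U × S with the segment [x, x+h] contained in U_S°. Then the map f : [0,1] → Y, t ↦ φ(x+th), is right-hand differentiable on [0,1) with f'_+(t) = D_Sφ(x+th)(h); if moreover −S ⊆ S, then f is differentiable on [0,1] with derivative D_Sφ(x+th)(h). -/
open Filter Topology Set RealInnerProductSpace

/-- `S` is star-convex with center `0`. -/
def StarCvx {X : Type*} [NormedAddCommGroup X] [NormedSpace ℝ X] (S : Set X) : Prop :=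
  ∀ h ∈ S, ∀ t : ℝ, 0 ≤ t → t ≤ 1 → t • h ∈ S

/-- The closure `V` of the linear span of `S`. -/
def spanCl {X : Type*} [NormedAddCommGroup X] [NormedSpace ℝ X] (S : Set X) : Submodule ℝ X :=
  (Submodule.span ℝ S).topologicalClosure

theorem mem_spanCl {X : Type*} [NormedAddCommGroup X] [NormedSpace ℝ X] {S : Set X} {h : X}
    (hS : h ∈ S) : h ∈ spanCl S :=
  Submodule.le_topologicalClosure _ (Submodule.subset_span hS)

/-- The `S`-interior of `U`. -/
def SInterior {X : Type*} [NormedAddCommGroup X] [NormedSpace ℝ X] (S U : Set X) : Set X :=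
  {x ∈ U | ∃ δ > 0, ∀ h ∈ S, ‖h‖ < δ → x + h ∈ U}

/-- `φ` is `S`-differentiable at `x` with `S`-oriented derivative `L ∈ L(V,Y)`:
`φ(x+h) = φ(x) + L(h) + o(‖h‖)` as `h → 0` on `S`. -/
def HasSDerivAt {X Y : Type*} [NormedAddCommGroup X] [NormedSpace ℝ X]
    [NormedAddCommGroup Y] [NormedSpace ℝ Y]
    (S : Set X) (φ : X → Y) (L : spanCl S →L[ℝ] Y) (x : X) : Prop :=
  ∀ ε > 0, ∃ δ > 0, ∀ h, ∀ hS : h ∈ S, ‖h‖ < δ →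
    ‖φ (x + h) - φ x - L ⟨h, mem_spanCl hS⟩‖ ≤ ε * ‖h‖

/-- `φ` is `S`-continuous at `x`: `φ(x+h) → φ(x)` as `h → 0` on `S`. -/
def SContAt {X Y : Type*} [NormedAddCommGroup X] [NormedSpace ℝ X]
    [NormedAddCommGroup Y] [NormedSpace ℝ Y] (S : Set X) (φ : X → Y) (x : X) : Prop :=
  ∀ ε > 0, ∃ δ > 0, ∀ h ∈ S, ‖h‖ < δ → ‖φ (x + h) - φ x‖ ≤ ε


theorem sDeriv_aux {X Y : Type*} [NormedAddCommGroup X] [NormedSpace ℝ X]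
    [NormedAddCommGroup Y] [NormedSpace ℝ Y]
    {S : Set X} {φ : X → Y} {x h : X} (hh : h ∈ S) {t : ℝ}
    {L : spanCl S →L[ℝ] Y} (hder : HasSDerivAt S φ L (x + t • h))
    {A : Set ℝ} (hA : ∀ s ∈ A, |s - t| ≤ 1 → s ≠ t → (s - t) • h ∈ S) :
    HasDerivWithinAt (fun s : ℝ => φ (x + s • h)) (L ⟨h, mem_spanCl hh⟩) A t := by
  rw [hasDerivWithinAt_iff_tendsto_slope, Metric.tendsto_nhdsWithin_nhds]
  intro ε hε
  have hhp : (0:ℝ) < ‖h‖ + 1 := by positivity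
  have hε' : 0 < ε / (2 * (‖h‖ + 1)) := by positivity
  obtain ⟨δ, hδ, hb⟩ := hder _ hε'
  refine ⟨min 1 (δ / (‖h‖ + 1)), by positivity, ?_⟩
  rintro s ⟨hsA, hst⟩ hds
  simp only [Set.mem_singleton_iff] at hst
  rw [Real.dist_eq] at hds
  have h1 : |s - t| ≤ 1 := le_of_lt (lt_of_lt_of_le hds (min_le_left _ _))
  have hk : (s - t) • h ∈ S := hA s hsA h1 hst
  have hnorm : ‖(s - t) • h‖ < δ := by
    rw [norm_smul, Real.norm_eq_abs]
    calc |s - t| * ‖h‖ ≤ |s - t| * (‖h‖ + 1) := by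
          nlinarith [abs_nonneg (s - t), norm_nonneg h]
      _ < (δ / (‖h‖ + 1)) * (‖h‖ + 1) :=
          mul_lt_mul_of_pos_right (lt_of_lt_of_le hds (min_le_right _ _)) hhp
      _ = δ := by field_simp
  have hb' := hb _ hk hnorm
  have heq : x + t • h + (s - t) • h = x + s • h := by rw [sub_smul]; abel
  have hsub : (⟨(s - t) • h, mem_spanCl hk⟩ : spanCl S)
      = (s - t) • (⟨h, mem_spanCl hh⟩ : spanCl S) := Subtype.ext rfl
  rw [heq, hsub, map_smul] at hb'
  have hne : s - t ≠ 0 := sub_ne_zero.mpr hst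
  have habs : 0 < |s - t| := abs_pos.mpr hne
  rw [dist_eq_norm, slope_def_module]
  have hrw : (s - t)⁻¹ • (φ (x + s • h) - φ (x + t • h)) - L ⟨h, mem_spanCl hh⟩
      = (s - t)⁻¹ • (φ (x + s • h) - φ (x + t • h) - (s - t) • L ⟨h, mem_spanCl hh⟩) := by
    simp only [smul_sub, smul_smul, inv_mul_cancel₀ hne, one_smul]
  rw [hrw, norm_smul, Real.norm_eq_abs, abs_inv]
  rw [norm_smul, Real.norm_eq_abs] at hb'
  have key : |s - t|⁻¹ * ‖φ (x + s • h) - φ (x + t • h) - (s - t) • L ⟨h, mem_spanCl hh⟩‖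
      ≤ ε / (2 * (‖h‖ + 1)) * ‖h‖ := by
    rw [← mul_le_mul_iff_right₀ habs, ← mul_assoc, mul_inv_cancel₀ (ne_of_gt habs), one_mul]
    calc ‖φ (x + s • h) - φ (x + t • h) - (s - t) • L ⟨h, mem_spanCl hh⟩‖
        ≤ ε / (2 * (‖h‖ + 1)) * (|s - t| * ‖h‖) := hb'
      _ = |s - t| * (ε / (2 * (‖h‖ + 1)) * ‖h‖) := by ring
  refine lt_of_le_of_lt key ?_
  rw [div_mul_eq_mul_div, div_lt_iff₀ (by positivity)]
  nlinarith [norm_nonneg h]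

/-- along a segment `[x, x+h] ⊆ U_S°` the map `t ↦ φ(x+th)` is right-hand
differentiable with right derivative `D_Sφ(x+th)(h)`; if moreover `−S ⊆ S`, it is
differentiable on `[0,1]` with that derivative. -/
theorem sDeriv_along_path {X Y : Type*} [NormedAddCommGroup X] [NormedSpace ℝ X]
    [CompleteSpace X] [NormedAddCommGroup Y] [NormedSpace ℝ Y] [CompleteSpace Y]
    {S : Set X} (hS : StarCvx S) {U : Set X} {φ : X → Y}
    (D : X → spanCl S →L[ℝ] Y) (hd : ∀ z ∈ SInterior S U, HasSDerivAt S φ (D z) z)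
    {x h : X} (hxU : x ∈ U) (hh : h ∈ S)
    (hseg : ∀ t : ℝ, 0 ≤ t → t ≤ 1 → x + t • h ∈ SInterior S U) :
    (∀ t : ℝ, 0 ≤ t → t < 1 →
      HasDerivWithinAt (fun s : ℝ => φ (x + s • h))
        (D (x + t • h) ⟨h, mem_spanCl hh⟩) (Set.Ici t) t) ∧
    ((∀ k ∈ S, -k ∈ S) → ∀ t : ℝ, 0 ≤ t → t ≤ 1 →
      HasDerivWithinAt (fun s : ℝ => φ (x + s • h))
        (D (x + t • h) ⟨h, mem_spanCl hh⟩) (Set.Icc 0 1) t) := by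
  constructor
  · intro t ht ht1
    refine sDeriv_aux hh (hd _ (hseg t ht ht1.le)) ?_
    intro s hs h1 hst
    have hts : t ≤ s := hs
    have h0 : 0 ≤ s - t := by linarith
    have hle : s - t ≤ 1 := by rwa [abs_of_nonneg h0] at h1
    exact hS h hh _ h0 hle
  · intro hneg t ht ht1
    refine sDeriv_aux hh (hd _ (hseg t ht ht1)) ?_
    intro s hs h1 hst
    rcases le_or_gt t s with hle | hlt
    · have h0 : 0 ≤ s - t := by linarith
      exact hS h hh _ h0 (by rwa [abs_of_nonneg h0] at h1)
    · have h0 : 0 ≤ t - s := by linarith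
      have : (s - t) • h = (t - s) • (-h) := by
        rw [smul_neg, ← neg_smul]; ring_nf
      rw [this]
      refine hS (-h) (hneg h hh) _ h0 ?_
      rw [abs_sub_comm, abs_of_nonneg h0] at h1
      exact h1
end

section
/- Mean value inequality for the oriented derivative: let S be balanced, φ : U → Y be S-differentiable, and (x,h) ∈ U × S with [x,x+h] ⊆ U_S°. Then |φ(x+h) − φ(x)| ≤ sup_{t∈(0,1)} |D_Sφ(x+th)| · |h|. -/
open Filter Topology Set RealInnerProductSpace

set_option maxHeartbeats 1600000
set_option synthInstance.maxHeartbeats 800000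

/-- mean value inequality for the oriented derivative. -/
theorem sDeriv_mean_value_inequality {X Y : Type*} [NormedAddCommGroup X] [NormedSpace ℝ X]
    [CompleteSpace X] [NormedAddCommGroup Y] [NormedSpace ℝ Y] [CompleteSpace Y]
    {S : Set X} (hS : StarCvx S) (hbal : ∀ k ∈ S, -k ∈ S) {U : Set X} {φ : X → Y}
    (D : X → spanCl S →L[ℝ] Y) (hd : ∀ z ∈ SInterior S U, HasSDerivAt S φ (D z) z)
    {x h : X} (hxU : x ∈ U) (hh : h ∈ S)
    (hseg : ∀ t : ℝ, 0 ≤ t → t ≤ 1 → x + t • h ∈ SInterior S U)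
    (C : ℝ) (hC : ∀ t : ℝ, 0 < t → t < 1 → ‖D (x + t • h)‖ ≤ C) :
    ‖φ (x + h) - φ x‖ ≤ C * ‖h‖ := by
  have tri : ∀ A c : Y, ‖A‖ ≤ ‖A - c‖ + ‖c‖ := fun A c => by
    simpa using norm_add_le (A - c) c
  have hC0 : 0 ≤ C := le_trans (ContinuousLinearMap.opNorm_nonneg _) (hC (1/2) (by norm_num) (by norm_num))
  have hmem : ∀ s : ℝ, |s| ≤ 1 → s • h ∈ S := by
    intro s hs
    rcases le_or_gt 0 s with h0 | h0
    · exact hS h hh s h0 (by rwa [abs_of_nonneg h0] at hs)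
    · have h1 : (-s) • h ∈ S := hS h hh _ (by linarith) (by rwa [abs_of_neg h0] at hs)
      simpa using hbal _ h1
  set g : ℝ → Y := fun t => φ (x + t • h) with hgdef
  set v : ℝ → Y := fun t => D (x + t • h) ⟨h, mem_spanCl hh⟩ with hvdef
  -- derivative of g on (0,1)
  have hderiv : ∀ t ∈ Ioo (0:ℝ) 1, HasDerivAt g (v t) t := by
    intro t ht
    rw [hasDerivAt_iff_isLittleO, Asymptotics.isLittleO_iff]
    intro c hc
    obtain ⟨δ, hδ, hδ'⟩ := hd _ (hseg t ht.1.le ht.2.le) (c / (‖h‖ + 1)) (by positivity)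
    have hnb : ∀ᶠ u in 𝓝 t, |u - t| < min (δ / (‖h‖ + 1)) 1 := by
      have hb := Metric.ball_mem_nhds t (show 0 < min (δ / (‖h‖ + 1)) 1 by positivity)
      filter_upwards [hb] with u hu using by simpa [Real.dist_eq] using hu
    filter_upwards [hnb] with u hu
    set s := u - t with hsdef
    rcases eq_or_ne s 0 with h0 | h0
    · have hut : u = t := by
        have h2 : u - t = 0 := by rw [← hsdef]; exact h0
        linarith
      simp [hut, h0]
    · have hslt : |s| < δ / (‖h‖ + 1) := lt_of_lt_of_le hu (min_le_left _ _)
      have hsS : s • h ∈ S := hmem s (le_of_lt (lt_of_lt_of_le hu (min_le_right _ _)))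
      have hnorm : ‖s • h‖ < δ := by
        rw [norm_smul, Real.norm_eq_abs]
        have h1 : (0:ℝ) < ‖h‖ + 1 := by positivity
        have h2 : |s| * (‖h‖ + 1) < δ := by
          rw [← lt_div_iff₀ h1]; exact hslt
        nlinarith [abs_nonneg s, norm_nonneg h]
      have key := hδ' (s • h) hsS hnorm
      have heq1 : x + t • h + s • h = x + u • h := by
        rw [hsdef]; module
      have heq2 : D (x + t • h) ⟨s • h, mem_spanCl hsS⟩ = s • v t := by
        have : (⟨s • h, mem_spanCl hsS⟩ : spanCl S) = s • ⟨h, mem_spanCl hh⟩ := rfl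
        rw [this, map_smul]
      rw [heq1, heq2] at key
      have : g u - g t - (u - t) • v t = φ (x + u • h) - φ (x + t • h) - s • v t := by
        rw [hgdef, hsdef]
      rw [this]
      calc ‖φ (x + u • h) - φ (x + t • h) - s • v t‖ ≤ c / (‖h‖ + 1) * ‖s • h‖ := key
        _ ≤ c * ‖u - t‖ := by
            rw [norm_smul, ← hsdef, Real.norm_eq_abs]
            have h1 : (0:ℝ) < ‖h‖ + 1 := by positivity
            rw [div_mul_eq_mul_div, mul_comm |s| ‖h‖, ← mul_assoc, div_le_iff₀ h1]
            nlinarith [abs_nonneg s, norm_nonneg h, hc.le]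
  -- quantitative continuity at endpoints
  obtain ⟨δ0, hδ0, H0⟩ := hd _ (hseg 0 le_rfl zero_le_one) 1 one_pos
  obtain ⟨δ1, hδ1, H1⟩ := hd _ (hseg 1 zero_le_one le_rfl) 1 one_pos
  set M : ℝ := ‖D (x + (0:ℝ) • h)‖ + ‖D (x + (1:ℝ) • h)‖ + 1 with hMdef
  have hM : 0 < M := by
    have h1 := ContinuousLinearMap.opNorm_nonneg (D (x + (0:ℝ) • h))
    have h2 := ContinuousLinearMap.opNorm_nonneg (D (x + (1:ℝ) • h))
    rw [hMdef]; linarith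
  refine le_of_forall_pos_le_add ?_
  intro ε hε
  set a : ℝ := min (min (1/4) (δ0 / (‖h‖ + 1))) (min (δ1 / (‖h‖ + 1)) (ε / (2 * M * (‖h‖ + 1)))) with hadef
  have ha0 : 0 < a := by positivity
  have ha14 : a ≤ 1/4 := le_trans (min_le_left _ _) (min_le_left _ _)
  have haδ0 : a ≤ δ0 / (‖h‖ + 1) := le_trans (min_le_left _ _) (min_le_right _ _)
  have haδ1 : a ≤ δ1 / (‖h‖ + 1) := le_trans (min_le_right _ _) (min_le_left _ _)
  have haε : a ≤ ε / (2 * M * (‖h‖ + 1)) := le_trans (min_le_right _ _) (min_le_right _ _)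
  have hhp : (0:ℝ) < ‖h‖ + 1 := by positivity
  -- endpoint 0
  have hA : ‖g a - g 0‖ ≤ ε / 2 := by
    have hin : a • h ∈ S := hmem a (by rw [abs_of_pos ha0]; linarith)
    have hlt : ‖a • h‖ < δ0 := by
      rw [norm_smul, Real.norm_eq_abs, abs_of_pos ha0]
      have : a * (‖h‖ + 1) ≤ δ0 := by rw [← le_div_iff₀ hhp]; exact haδ0
      nlinarith
    have k1 := H0 (a • h) hin hlt
    have k2 : ‖D (x + (0:ℝ) • h) ⟨a • h, mem_spanCl hin⟩‖ ≤ ‖D (x + (0:ℝ) • h)‖ * ‖a • h‖ := by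
      have := (D (x + (0:ℝ) • h)).le_opNorm ⟨a • h, mem_spanCl hin⟩
      simpa using this
    have heq : x + (0:ℝ) • h + a • h = x + a • h := by module
    rw [heq] at k1
    have hbd : ‖g a - g 0‖ ≤ M * (a * ‖h‖) := by
      calc ‖g a - g 0‖ = ‖φ (x + a • h) - φ (x + (0:ℝ) • h)‖ := rfl
        _ ≤ ‖φ (x + a • h) - φ (x + (0:ℝ) • h) - D (x + (0:ℝ) • h) ⟨a • h, mem_spanCl hin⟩‖
            + ‖D (x + (0:ℝ) • h) ⟨a • h, mem_spanCl hin⟩‖ := tri _ _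
        _ ≤ 1 * ‖a • h‖ + ‖D (x + (0:ℝ) • h)‖ * ‖a • h‖ := add_le_add k1 k2
        _ ≤ M * (a * ‖h‖) := by
            rw [norm_smul, Real.norm_eq_abs, abs_of_pos ha0, hMdef]
            nlinarith [ContinuousLinearMap.opNorm_nonneg (D (x + (1:ℝ) • h)), norm_nonneg h, ha0.le,
              ContinuousLinearMap.opNorm_nonneg (D (x + (0:ℝ) • h)),
              mul_nonneg ha0.le (norm_nonneg h),
              mul_nonneg (ContinuousLinearMap.opNorm_nonneg (D (x + (0:ℝ) • h))) (mul_nonneg ha0.le (norm_nonneg h)),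
              mul_nonneg (ContinuousLinearMap.opNorm_nonneg (D (x + (1:ℝ) • h))) (mul_nonneg ha0.le (norm_nonneg h))]
    have : M * (a * ‖h‖) ≤ ε / 2 := by
      have h1 : a * (2 * M * (‖h‖ + 1)) ≤ ε := by
        rw [← le_div_iff₀ (by positivity)]; exact haε
      nlinarith [norm_nonneg h, ha0.le, hM.le, mul_nonneg ha0.le hM.le,
        mul_nonneg (mul_nonneg ha0.le hM.le) (norm_nonneg h)]
    exact hbd.trans this
  -- endpoint 1
  have hB : ‖g 1 - g (1 - a)‖ ≤ ε / 2 := by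
    have hin : (-a) • h ∈ S := hmem (-a) (by rw [abs_neg, abs_of_pos ha0]; linarith)
    have hlt : ‖(-a) • h‖ < δ1 := by
      rw [norm_smul, Real.norm_eq_abs, abs_neg, abs_of_pos ha0]
      have : a * (‖h‖ + 1) ≤ δ1 := by rw [← le_div_iff₀ hhp]; exact haδ1
      nlinarith
    have k1 := H1 ((-a) • h) hin hlt
    have k2 : ‖D (x + (1:ℝ) • h) ⟨(-a) • h, mem_spanCl hin⟩‖ ≤ ‖D (x + (1:ℝ) • h)‖ * ‖(-a) • h‖ := by
      have := (D (x + (1:ℝ) • h)).le_opNorm ⟨(-a) • h, mem_spanCl hin⟩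
      simpa using this
    have heq : x + (1:ℝ) • h + (-a) • h = x + (1 - a) • h := by module
    rw [heq] at k1
    have hbd : ‖g 1 - g (1 - a)‖ ≤ M * (a * ‖h‖) := by
      calc ‖g 1 - g (1 - a)‖ = ‖φ (x + (1 - a) • h) - φ (x + (1:ℝ) • h)‖ := by
              rw [norm_sub_rev]
        _ ≤ ‖φ (x + (1 - a) • h) - φ (x + (1:ℝ) • h) - D (x + (1:ℝ) • h) ⟨(-a) • h, mem_spanCl hin⟩‖
            + ‖D (x + (1:ℝ) • h) ⟨(-a) • h, mem_spanCl hin⟩‖ := tri _ _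
        _ ≤ 1 * ‖(-a) • h‖ + ‖D (x + (1:ℝ) • h)‖ * ‖(-a) • h‖ := add_le_add k1 k2
        _ ≤ M * (a * ‖h‖) := by
            rw [norm_smul, Real.norm_eq_abs, abs_neg, abs_of_pos ha0, hMdef]
            nlinarith [ContinuousLinearMap.opNorm_nonneg (D (x + (1:ℝ) • h)), norm_nonneg h, ha0.le,
              ContinuousLinearMap.opNorm_nonneg (D (x + (0:ℝ) • h)),
              mul_nonneg ha0.le (norm_nonneg h),
              mul_nonneg (ContinuousLinearMap.opNorm_nonneg (D (x + (0:ℝ) • h))) (mul_nonneg ha0.le (norm_nonneg h)),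
              mul_nonneg (ContinuousLinearMap.opNorm_nonneg (D (x + (1:ℝ) • h))) (mul_nonneg ha0.le (norm_nonneg h))]
    have : M * (a * ‖h‖) ≤ ε / 2 := by
      have h1 : a * (2 * M * (‖h‖ + 1)) ≤ ε := by
        rw [← le_div_iff₀ (by positivity)]; exact haε
      nlinarith [norm_nonneg h, ha0.le, hM.le, mul_nonneg ha0.le hM.le,
        mul_nonneg (mul_nonneg ha0.le hM.le) (norm_nonneg h)]
    exact hbd.trans this
  -- middle segment
  have hmid : ‖g (1 - a) - g a‖ ≤ C * ‖h‖ := by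
    have hle : a ≤ 1 - a := by linarith
    have hf : ∀ u ∈ Icc a (1 - a), HasDerivWithinAt g (v u) (Icc a (1 - a)) u := by
      intro u hu
      exact (hderiv u ⟨lt_of_lt_of_le ha0 hu.1, lt_of_le_of_lt hu.2 (by linarith)⟩).hasDerivWithinAt
    have hbound : ∀ u ∈ Ico a (1 - a), ‖v u‖ ≤ C * ‖h‖ := by
      intro u hu
      have hu01 : 0 < u ∧ u < 1 := ⟨lt_of_lt_of_le ha0 hu.1, lt_of_lt_of_le hu.2 (by linarith)⟩
      calc ‖v u‖ ≤ ‖D (x + u • h)‖ * ‖(⟨h, mem_spanCl hh⟩ : spanCl S)‖ :=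
            (D (x + u • h)).le_opNorm _
        _ ≤ C * ‖h‖ := by
            have hn : ‖(⟨h, mem_spanCl hh⟩ : spanCl S)‖ = ‖h‖ := rfl
            rw [hn]
            exact mul_le_mul_of_nonneg_right (hC u hu01.1 hu01.2) (norm_nonneg h)
    have := norm_image_sub_le_of_norm_deriv_le_segment' hf hbound (1 - a)
      ⟨hle, le_refl _⟩
    calc ‖g (1 - a) - g a‖ ≤ C * ‖h‖ * (1 - a - a) := this
      _ ≤ C * ‖h‖ * 1 := by
          apply mul_le_mul_of_nonneg_left (by linarith) (by positivity)
      _ = C * ‖h‖ := mul_one _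
  have hfin : ‖g 1 - g 0‖ ≤ C * ‖h‖ + ε := by
    calc ‖g 1 - g 0‖ = ‖(g 1 - g (1 - a)) + (g (1 - a) - g a) + (g a - g 0)‖ := by abel_nf
      _ ≤ ‖(g 1 - g (1 - a)) + (g (1 - a) - g a)‖ + ‖g a - g 0‖ := norm_add_le _ _
      _ ≤ ‖g 1 - g (1 - a)‖ + ‖g (1 - a) - g a‖ + ‖g a - g 0‖ := by
          exact add_le_add_left (norm_add_le _ _) _
      _ ≤ ε / 2 + (C * ‖h‖) + ε / 2 := by linarith
      _ = C * ‖h‖ + ε := by ring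
  have hg1 : g 1 = φ (x + h) := by rw [hgdef]; simp
  have hg0 : g 0 = φ x := by rw [hgdef]; simp
  rw [← hg1, ← hg0]
  exact hfin
end

section
/- Fundamental theorem for the oriented derivative: if S is balanced, φ : U → Y is continuously S-differentiable, and (x,h) ∈ U × S satisfies [x,x+h] ⊆ U_S°, then φ(x+h) = φ(x) + ∫₀¹ D_Sφ(x+th)(h) dt. -/
open Filter Topology Set RealInnerProductSpace

/-- fundamental theorem for the oriented derivative. -/
theorem sDeriv_integral_mean_value {X Y : Type*} [NormedAddCommGroup X] [NormedSpace ℝ X]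
    [CompleteSpace X] [NormedAddCommGroup Y] [NormedSpace ℝ Y] [CompleteSpace Y]
    {S : Set X} (hS : StarCvx S) (hbal : ∀ k ∈ S, -k ∈ S) {U : Set X} {φ : X → Y}
    (D : X → spanCl S →L[ℝ] Y) (hd : ∀ z ∈ SInterior S U, HasSDerivAt S φ (D z) z)
    (hDc : ∀ z ∈ SInterior S U, SContAt S D z)
    {x h : X} (hxU : x ∈ U) (hh : h ∈ S)
    (hseg : ∀ t : ℝ, 0 ≤ t → t ≤ 1 → x + t • h ∈ SInterior S U) :
    φ (x + h) = φ x + ∫ t in (0:ℝ)..1, D (x + t • h) ⟨h, mem_spanCl hh⟩ := by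

  have hmemS : ∀ t : ℝ, |t| ≤ 1 → t • h ∈ S := by
    intro t ht
    rcases le_or_gt 0 t with h0 | h0
    · exact hS h hh t h0 (by rwa [abs_of_nonneg h0] at ht)
    · have heq : t • h = (-t) • (-h) := by simp
      rw [heq]
      exact hS (-h) (hbal h hh) (-t) (by linarith) (by rwa [abs_of_neg h0] at ht)
  set L : ℝ → Y := fun s => D (x + s • h) ⟨h, mem_spanCl hh⟩ with hL
  have hnorm_coe : ‖(⟨h, mem_spanCl hh⟩ : spanCl S)‖ = ‖h‖ := rfl
  have hderiv : ∀ t ∈ uIcc (0:ℝ) 1, HasDerivAt (fun s => φ (x + s • h)) (L t) t := by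
    intro t ht
    rw [Set.uIcc_of_le zero_le_one] at ht
    have hz := hseg t ht.1 ht.2
    rw [hasDerivAt_iff_isLittleO, Asymptotics.isLittleO_iff]
    intro ε hε
    have hε' : ε / (‖h‖ + 1) > 0 := div_pos hε (by positivity)
    obtain ⟨δ, hδ, hδ'⟩ := hd _ hz _ hε'
    rw [Metric.eventually_nhds_iff]
    refine ⟨min (δ / (‖h‖ + 1)) 1, by positivity, ?_⟩
    intro s hs
    rw [Real.dist_eq] at hs
    have hs1 : |s - t| ≤ 1 := le_of_lt (lt_of_lt_of_le hs (min_le_right _ _))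
    have hsδ : |s - t| < δ / (‖h‖ + 1) := lt_of_lt_of_le hs (min_le_left _ _)
    have hkS : (s - t) • h ∈ S := hmemS _ hs1
    have hknorm : ‖(s - t) • h‖ < δ := by
      rw [norm_smul, Real.norm_eq_abs]
      have h2 : |s - t| * (‖h‖ + 1) < δ := (lt_div_iff₀ (by positivity)).mp hsδ
      nlinarith [abs_nonneg (s - t)]
    have hb := hδ' _ hkS hknorm
    have heq : x + t • h + (s - t) • h = x + s • h := by module
    rw [heq] at hb
    have hsub : (⟨(s - t) • h, mem_spanCl hkS⟩ : spanCl S)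
        = (s - t) • (⟨h, mem_spanCl hh⟩ : spanCl S) := rfl
    rw [hsub, map_smul] at hb
    have hbound : ε / (‖h‖ + 1) * ‖(s - t) • h‖ ≤ ε * ‖s - t‖ := by
      rw [norm_smul, Real.norm_eq_abs]
      rw [div_mul_eq_mul_div, div_le_iff₀ (by positivity)]
      nlinarith [abs_nonneg (s - t), norm_nonneg h, hε.le]
    exact le_trans hb hbound
  have hcont : ContinuousOn L (uIcc (0:ℝ) 1) := by
    rw [Set.uIcc_of_le zero_le_one]
    intro t ht
    apply ContinuousAt.continuousWithinAt
    rw [Metric.continuousAt_iff]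
    intro ε hε
    obtain ⟨δ, hδ, hδ'⟩ := hDc _ (hseg t ht.1 ht.2) (ε / 2 / (‖h‖ + 1)) (by positivity)
    refine ⟨min (δ / (‖h‖ + 1)) 1, by positivity, ?_⟩
    intro s hs
    rw [Real.dist_eq] at hs
    have hs1 : |s - t| ≤ 1 := le_of_lt (lt_of_lt_of_le hs (min_le_right _ _))
    have hsδ : |s - t| < δ / (‖h‖ + 1) := lt_of_lt_of_le hs (min_le_left _ _)
    have hkS : (s - t) • h ∈ S := hmemS _ hs1
    have hknorm : ‖(s - t) • h‖ < δ := by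
      rw [norm_smul, Real.norm_eq_abs]
      have h2 : |s - t| * (‖h‖ + 1) < δ := (lt_div_iff₀ (by positivity)).mp hsδ
      nlinarith [abs_nonneg (s - t)]
    have hb := hδ' _ hkS hknorm
    have heq : x + t • h + (s - t) • h = x + s • h := by module
    rw [heq] at hb
    rw [dist_eq_norm]
    have h1 : L s - L t = (D (x + s • h) - D (x + t • h)) ⟨h, mem_spanCl hh⟩ := by
      simp [hL]
    rw [h1]
    calc ‖(D (x + s • h) - D (x + t • h)) (⟨h, mem_spanCl hh⟩ : spanCl S)‖
        ≤ ‖D (x + s • h) - D (x + t • h)‖ * ‖(⟨h, mem_spanCl hh⟩ : spanCl S)‖ :=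
          ContinuousLinearMap.le_opNorm _ _
      _ ≤ ε / 2 / (‖h‖ + 1) * ‖h‖ := by
          rw [hnorm_coe]
          exact mul_le_mul_of_nonneg_right hb (norm_nonneg h)
      _ < ε := by
          rw [div_mul_eq_mul_div, div_lt_iff₀ (by positivity)]
          nlinarith [norm_nonneg h]
  have key := intervalIntegral.integral_eq_sub_of_hasDerivAt hderiv
    (hcont.intervalIntegrable)
  simp only [one_smul, zero_smul, add_zero] at key
  rw [key]
  abel
end

section
/- Taylor formula for the oriented derivative: let S be balanced, n ∈ ℕ, and φ : U → Y be n-times continuously S-differentiable. Then for all (x,h) ∈ U × S with [x,x+h] ⊆ U_S°, φ(x+h) − φ(x) = Σ_{k=1}^{n} (1/k!) D_S^kφ(x)(h,…,h) + ∫₀¹ ((1−t)^{n−1}/(n−1)!)(D_S^nφ(x+th) − D_S^nφ(x))(h,…,h) dt. -/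
open Filter Topology Set RealInnerProductSpace

section TaylorAux

open Set intervalIntegral

private lemma starCvx_smul_mem {X : Type*} [NormedAddCommGroup X] [NormedSpace ℝ X]
    {S : Set X} (hS : StarCvx S) (hbal : ∀ k ∈ S, -k ∈ S) {h : X} (hh : h ∈ S)
    {s : ℝ} (hs : |s| ≤ 1) : s • h ∈ S := by
  rcases le_or_gt 0 s with h0 | h0
  · exact hS h hh s h0 (by rwa [abs_of_nonneg h0] at hs)
  · have : s • h = (-s) • (-h) := by simp
    rw [this]
    exact hS (-h) (hbal h hh) (-s) (by linarith) (by rw [abs_of_neg h0] at hs; linarith)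

private lemma hasDerivAt_cfun (n : ℕ) (hn : 1 ≤ n) (t : ℝ) :
    HasDerivAt (fun t : ℝ => -((1-t)^n / n.factorial))
      ((1-t)^(n-1)/(n-1).factorial) t := by
  have h1 : HasDerivAt (fun t : ℝ => (1-t)) (-1) t := by
    simpa using (hasDerivAt_id t).const_sub 1
  have h2 : HasDerivAt (fun t : ℝ => (1-t)^n) ((n:ℝ) * (1-t)^(n-1) * (-1)) t := h1.pow n
  have h3 := (h2.div_const (n.factorial : ℝ)).neg
  refine h3.congr_deriv ?_
  symm
  have hfac : (n.factorial : ℝ) = n * (n-1).factorial := by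
    rw [← Nat.mul_factorial_pred (by omega)]; push_cast; ring
  rw [hfac]
  have h4 : ((n:ℝ)) ≠ 0 := by positivity
  have h5 : ((n-1).factorial : ℝ) ≠ 0 := by positivity
  field_simp

private lemma cfun_integral (n : ℕ) (hn : 1 ≤ n) :
    (∫ t in (0:ℝ)..1, ((1-t)^(n-1)/(n-1).factorial : ℝ)) = (n.factorial:ℝ)⁻¹ := by
  rw [integral_eq_sub_of_hasDerivAt (f := fun t : ℝ => -((1-t)^n / n.factorial))
    (fun t _ => hasDerivAt_cfun n hn t)
    (Continuous.intervalIntegrable (by continuity) 0 1)]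
  rw [sub_eq_iff_eq_add]
  simp [zero_pow (by omega : n ≠ 0), div_eq_mul_inv]

private lemma taylor_aux {Y : Type*} [NormedAddCommGroup Y] [NormedSpace ℝ Y] [CompleteSpace Y]
    (fs : ℕ → ℝ → Y) (n : ℕ) (hn : 1 ≤ n)
    (hderiv : ∀ k < n, ∀ t ∈ Set.Icc (0:ℝ) 1, HasDerivAt (fs k) (fs (k+1) t) t)
    (hcont : ContinuousOn (fs n) (Set.Icc 0 1)) :
    fs 0 1 - fs 0 0 = ∑ k ∈ Finset.Icc 1 (n-1), ((k.factorial:ℝ)⁻¹ • fs k 0)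
      + ∫ t in (0:ℝ)..1, ((1-t)^(n-1)/(n-1).factorial : ℝ) • fs n t := by
  induction n, hn using Nat.le_induction with
  | base =>
    have h1 : ∀ t ∈ uIcc (0:ℝ) 1, HasDerivAt (fs 0) (fs 1 t) t := by
      intro t ht
      exact hderiv 0 one_pos t (by simpa [Set.uIcc_of_le (zero_le_one' ℝ)] using ht)
    have h2 : IntervalIntegrable (fs 1) MeasureTheory.volume 0 1 := by
      apply ContinuousOn.intervalIntegrable
      simpa [Set.uIcc_of_le (zero_le_one' ℝ)] using hcont
    have := integral_eq_sub_of_hasDerivAt h1 h2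
    simp only [Nat.sub_self, Finset.Icc_self, pow_zero, Nat.factorial_zero, Finset.sum_empty]
    rw [← this]
    simp
  | succ n hn IH =>
    have hcn : ContinuousOn (fs n) (Set.Icc (0:ℝ) 1) := fun t ht =>
      ((hderiv n (Nat.lt_succ_self n) t ht).continuousAt).continuousWithinAt
    have hIH := IH (fun k hk => hderiv k (hk.trans (Nat.lt_succ_self n))) hcn
    set c : ℝ → ℝ := fun t => -((1-t)^n / n.factorial) with hc
    have hderc : ∀ t : ℝ, HasDerivAt c ((1-t)^(n-1)/(n-1).factorial) t :=
      fun t => hasDerivAt_cfun n hn t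
    have hF : ∀ t ∈ uIcc (0:ℝ) 1, HasDerivAt (fun t => c t • fs n t)
        (c t • fs (n+1) t + ((1-t)^(n-1)/(n-1).factorial) • fs n t) t := by
      intro t ht
      rw [Set.uIcc_of_le (zero_le_one' ℝ)] at ht
      exact (hderc t).smul (hderiv n (Nat.lt_succ_self n) t ht)
    have hi1 : IntervalIntegrable (fun t => ((1-t)^(n-1)/(n-1).factorial : ℝ) • fs n t)
        MeasureTheory.volume 0 1 := by
      apply ContinuousOn.intervalIntegrable
      rw [Set.uIcc_of_le (zero_le_one' ℝ)]
      exact (Continuous.continuousOn (by continuity)).smul hcn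
    have hi2 : IntervalIntegrable (fun t => c t • fs (n+1) t) MeasureTheory.volume 0 1 := by
      apply ContinuousOn.intervalIntegrable
      rw [Set.uIcc_of_le (zero_le_one' ℝ)]
      exact (Continuous.continuousOn (by continuity)).smul hcont
    have hparts := integral_eq_sub_of_hasDerivAt hF (hi2.add hi1)
    rw [integral_add hi2 hi1] at hparts
    have hc1 : c 1 = 0 := by
      simp [hc, zero_pow (by omega : n ≠ 0)]
    have hc0 : c 0 = -((n.factorial:ℝ)⁻¹) := by
      simp [hc]
    have hneg : (∫ t in (0:ℝ)..1, c t • fs (n+1) t)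
        = -∫ t in (0:ℝ)..1, ((1-t)^n/n.factorial : ℝ) • fs (n+1) t := by
      rw [← integral_neg]
      congr 1; funext t; simp [hc]
    rw [hneg, hc1, hc0] at hparts
    have key : (∫ t in (0:ℝ)..1, ((1-t)^(n-1)/(n-1).factorial : ℝ) • fs n t)
        = (n.factorial:ℝ)⁻¹ • fs n 0 + ∫ t in (0:ℝ)..1, ((1-t)^n/n.factorial : ℝ) • fs (n+1) t := by
      have h6 := eq_sub_of_add_eq' hparts
      rw [h6]
      simp only [zero_smul, neg_smul, zero_sub, neg_neg, sub_neg_eq_add]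
      abel
    obtain ⟨m, rfl⟩ : ∃ m, n = m + 1 := ⟨n-1, by omega⟩
    rw [hIH, key]
    simp only [Nat.add_sub_cancel]
    rw [Finset.sum_Icc_succ_top (by omega : 1 ≤ m + 1)]
    abel

end TaylorAux

set_option synthInstance.maxHeartbeats 1000000 in
set_option maxHeartbeats 2000000 in
/-- Taylor's formula for the oriented derivative. The higher-order
`S`-derivatives are given as a family `D k : X → L^k(V, Y)` of continuous multilinear maps,
where `D 0 x = φ x` and `D (k+1) z`, in curried form, is the `S`-derivative of `D k` at `z`. -/
theorem sDeriv_taylor_formula {X Y : Type*} [NormedAddCommGroup X] [NormedSpace ℝ X]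
    [CompleteSpace X] [NormedAddCommGroup Y] [NormedSpace ℝ Y] [CompleteSpace Y]
    {S : Set X} (hS : StarCvx S) (hbal : ∀ k ∈ S, -k ∈ S) {U : Set X} {φ : X → Y}
    (n : ℕ) (hn : 1 ≤ n)
    (D : (k : ℕ) → X → ContinuousMultilinearMap ℝ (fun _ : Fin k => spanCl S) Y)
    (hD0 : ∀ z : X, D 0 z 0 = φ z)
    (hDk : ∀ k < n, ∀ z ∈ SInterior S U,
      HasSDerivAt S (fun w => D k w) ((D (k + 1) z).curryLeft) z)
    (hcont : ∀ z ∈ SInterior S U, SContAt S (D n) z)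
    {x h : X} (hxU : x ∈ U) (hh : h ∈ S)
    (hseg : ∀ t : ℝ, 0 ≤ t → t ≤ 1 → x + t • h ∈ SInterior S U) :
    φ (x + h) - φ x =
      ∑ k ∈ Finset.Icc 1 n, ((k.factorial : ℝ)⁻¹ • D k x fun _ => ⟨h, mem_spanCl hh⟩)
        + ∫ t in (0:ℝ)..1, ((1 - t) ^ (n - 1) / (n - 1).factorial : ℝ) •
            ((D n (x + t • h) - D n x) fun _ => ⟨h, mem_spanCl hh⟩) := by

  classical
  obtain ⟨nm, rfl⟩ : ∃ nm, n = nm + 1 := ⟨n - 1, by omega⟩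
  set hv : spanCl S := (⟨h, mem_spanCl hh⟩ : spanCl S) with hvdef
  set n := nm + 1 with hndef
  set fs : ℕ → ℝ → Y := fun k t => D k (x + t • h) (fun _ => hv) with hfsdef
  have hvnorm : ‖hv‖ = ‖h‖ := rfl
  have heval : ∀ (k : ℕ) (f : ContinuousMultilinearMap ℝ (fun _ : Fin k => spanCl S) Y),
      ‖f (fun _ => hv)‖ ≤ ‖f‖ * ‖h‖ ^ k := by
    intro k f
    have := f.le_opNorm (fun _ => hv)
    simpa [hvnorm, Finset.prod_const] using this
  have hcons : ∀ k : ℕ, (Fin.cons hv (fun _ : Fin k => hv) : Fin (k+1) → spanCl S)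
      = fun _ => hv := by
    intro k
    funext i
    refine Fin.cases ?_ ?_ i <;> simp
  have hsmem : ∀ {s : ℝ}, |s| ≤ 1 → s • h ∈ S := fun hs => starCvx_smul_mem hS hbal hh hs
  -- derivative of fs k
  have hderiv : ∀ k < n, ∀ t ∈ Set.Icc (0:ℝ) 1, HasDerivAt (fs k) (fs (k+1) t) t := by
    intro k hk t ht
    have hz := hseg t ht.1 ht.2
    have hd := hDk k hk _ hz
    rw [hasDerivAt_iff_isLittleO, Asymptotics.isLittleO_iff]
    intro ε hε
    obtain ⟨δ, hδ, hbound⟩ := hd (ε / (‖h‖^(k+1) + 1)) (by positivity)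
    have hδ' : (0:ℝ) < min (δ / (‖h‖ + 1)) 1 := lt_min (by positivity) one_pos
    filter_upwards [Metric.ball_mem_nhds t hδ'] with x' hx'
    rw [Metric.mem_ball, Real.dist_eq] at hx'
    set s := x' - t with hsdef
    have hs1 : |s| ≤ 1 := le_of_lt (lt_of_lt_of_le hx' (min_le_right _ _))
    have hmem : s • h ∈ S := hsmem hs1
    have hnorm : ‖s • h‖ < δ := by
      rw [norm_smul, Real.norm_eq_abs]
      have h1 : |s| < δ / (‖h‖ + 1) := lt_of_lt_of_le hx' (min_le_left _ _)
      rw [lt_div_iff₀ (by positivity)] at h1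
      nlinarith [abs_nonneg s]
    have hb := hbound (s • h) hmem hnorm
    have hpt : x + t • h + s • h = x + x' • h := by
      rw [hsdef, sub_smul]; abel
    have hcurry : ((D (k+1) (x + t • h)).curryLeft ⟨s • h, mem_spanCl hmem⟩) (fun _ => hv)
        = s • fs (k+1) t := by
      have h1 : (⟨s • h, mem_spanCl hmem⟩ : spanCl S) = s • hv := rfl
      rw [h1, map_smul, ContinuousMultilinearMap.smul_apply]
      congr 1
      rw [ContinuousMultilinearMap.curryLeft_apply, hcons k]
    have happ : fs k x' - fs k t - (x' - t) • fs (k+1) t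
        = (D k (x + t • h + s • h) - D k (x + t • h)
            - (D (k+1) (x + t • h)).curryLeft ⟨s • h, mem_spanCl hmem⟩) (fun _ => hv) := by
      rw [ContinuousMultilinearMap.sub_apply, ContinuousMultilinearMap.sub_apply, hcurry, hpt]
    calc ‖fs k x' - fs k t - (x' - t) • fs (k+1) t‖
        = ‖(D k (x + t • h + s • h) - D k (x + t • h)
            - (D (k+1) (x + t • h)).curryLeft ⟨s • h, mem_spanCl hmem⟩) (fun _ => hv)‖ := by
          rw [happ]
      _ ≤ ‖D k (x + t • h + s • h) - D k (x + t • h)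
            - (D (k+1) (x + t • h)).curryLeft ⟨s • h, mem_spanCl hmem⟩‖ * ‖h‖ ^ k :=
          heval k _
      _ ≤ (ε / (‖h‖^(k+1) + 1) * ‖s • h‖) * ‖h‖ ^ k := by
          apply mul_le_mul_of_nonneg_right hb (by positivity)
      _ ≤ ε * ‖s‖ := by
          rw [norm_smul, Real.norm_eq_abs]
          have hle : ε / (‖h‖^(k+1) + 1) * (‖h‖ * ‖h‖ ^ k) ≤ ε := by
            rw [← pow_succ']
            rw [div_mul_eq_mul_div, div_le_iff₀ (by positivity)]
            nlinarith [pow_nonneg (norm_nonneg h) (k+1)]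
          calc ε / (‖h‖^(k+1) + 1) * (|s| * ‖h‖) * ‖h‖ ^ k
              = (ε / (‖h‖^(k+1) + 1) * (‖h‖ * ‖h‖ ^ k)) * |s| := by ring
            _ ≤ ε * |s| := mul_le_mul_of_nonneg_right hle (abs_nonneg s)
  -- continuity of fs n
  have hcont' : ContinuousOn (fs n) (Set.Icc (0:ℝ) 1) := by
    intro t ht
    apply ContinuousAt.continuousWithinAt
    rw [Metric.continuousAt_iff]
    intro ε hε
    obtain ⟨δ, hδ, hbound⟩ := hcont _ (hseg t ht.1 ht.2) (ε / (2 * (‖h‖ ^ n + 1)))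
      (by positivity)
    refine ⟨min (δ / (‖h‖ + 1)) 1, lt_min (by positivity) one_pos, ?_⟩
    intro x' hx'
    rw [Real.dist_eq] at hx'
    set s := x' - t with hsdef
    have hs1 : |s| ≤ 1 := le_of_lt (lt_of_lt_of_le hx' (min_le_right _ _))
    have hmem : s • h ∈ S := hsmem hs1
    have hnorm : ‖s • h‖ < δ := by
      rw [norm_smul, Real.norm_eq_abs]
      have h1 : |s| < δ / (‖h‖ + 1) := lt_of_lt_of_le hx' (min_le_left _ _)
      rw [lt_div_iff₀ (by positivity)] at h1
      nlinarith [abs_nonneg s]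
    have hb := hbound (s • h) hmem hnorm
    have hpt : x + t • h + s • h = x + x' • h := by
      rw [hsdef, sub_smul]; abel
    rw [dist_eq_norm]
    have happ : fs n x' - fs n t = (D n (x + t • h + s • h) - D n (x + t • h))
        (fun _ => hv) := by
      rw [ContinuousMultilinearMap.sub_apply, hpt]
    calc ‖fs n x' - fs n t‖
        = ‖(D n (x + t • h + s • h) - D n (x + t • h)) (fun _ => hv)‖ := by rw [happ]
      _ ≤ ‖D n (x + t • h + s • h) - D n (x + t • h)‖ * ‖h‖ ^ n := heval n _
      _ ≤ ε / (2 * (‖h‖ ^ n + 1)) * ‖h‖ ^ n :=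
          mul_le_mul_of_nonneg_right hb (by positivity)
      _ < ε := by
          rw [div_mul_eq_mul_div, div_lt_iff₀ (by positivity)]
          nlinarith [pow_nonneg (norm_nonneg h) n]
  have htaylor := taylor_aux fs n (by omega) hderiv hcont'
  have hfs01 : fs 0 1 = φ (x + h) := by
    show D 0 (x + (1:ℝ) • h) (fun _ => hv) = _
    rw [one_smul, ← hD0 (x + h)]
    congr 1
    exact Subsingleton.elim _ _
  have hfs00 : fs 0 0 = φ x := by
    show D 0 (x + (0:ℝ) • h) (fun _ => hv) = _
    rw [zero_smul, add_zero, ← hD0 x]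
    congr 1
    exact Subsingleton.elim _ _
  have hfs0 : ∀ k, fs k 0 = D k x (fun _ => hv) := by
    intro k
    show D k (x + (0:ℝ) • h) (fun _ => hv) = _
    rw [zero_smul, add_zero]
  rw [hfs01, hfs00] at htaylor
  rw [htaylor]
  -- now massage the RHS
  have hint1 : IntervalIntegrable (fun t => ((1-t)^(n-1)/(n-1).factorial : ℝ) • fs n t)
      MeasureTheory.volume 0 1 := by
    apply ContinuousOn.intervalIntegrable
    rw [Set.uIcc_of_le (zero_le_one' ℝ)]
    exact (Continuous.continuousOn (by continuity)).smul hcont'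
  have hint2 : IntervalIntegrable
      (fun t => ((1-t)^(n-1)/(n-1).factorial : ℝ) • (D n x (fun _ => hv)))
      MeasureTheory.volume 0 1 :=
    Continuous.intervalIntegrable (by continuity) 0 1
  have hint : (∫ t in (0:ℝ)..1, ((1-t)^(n-1)/(n-1).factorial : ℝ) •
          ((D n (x + t • h) - D n x) (fun _ => hv)))
      = (∫ t in (0:ℝ)..1, ((1-t)^(n-1)/(n-1).factorial : ℝ) • fs n t)
        - (n.factorial : ℝ)⁻¹ • D n x (fun _ => hv) := by
    have h1 : ∀ t : ℝ, ((1-t)^(n-1)/(n-1).factorial : ℝ) •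
        ((D n (x + t • h) - D n x) (fun _ => hv))
        = ((1-t)^(n-1)/(n-1).factorial : ℝ) • fs n t
          - ((1-t)^(n-1)/(n-1).factorial : ℝ) • (D n x (fun _ => hv)) := by
      intro t
      rw [ContinuousMultilinearMap.sub_apply, smul_sub]
    simp_rw [h1]
    rw [intervalIntegral.integral_sub hint1 hint2,
      intervalIntegral.integral_smul_const, cfun_integral n (by omega)]
  rw [hint]
  rw [Finset.sum_Icc_succ_top (by omega : 1 ≤ nm + 1)]
  simp only [hndef, Nat.add_sub_cancel] at *
  simp only [hfs0]
  abel
end
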